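/- Mixture representation gives credal membership: suppose {K^β : β ∈ [0,1]} is a family of probability measures on T with K^β supported on C_β = {θ : π(θ) > β} (i.e., K^β(C_β) = 1) for each β, and M is a probability measure on [0,1] that is stochastically no smaller than Uniform(0,1) (M([0, β]) ≤ β for all β). Then the mixture Q(·) = ∫₀¹ K^β(·) M(dβ) satisfies Q(C_α) ≥ 1 − α for all α ∈ [0,1]; i.e., Q assigns at least 1 − α mass to every α-level set of the contour π. -/

import Mathlib

open MeasureTheory Set ENNReal

/-- Mixture representation gives credal membership: if `K^β` is supported on
the level set `C_β = {θ : π(θ) > β}` for each `β ∈ [0,1]`, and `M` on `[0,1]`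
is stochastically no smaller than Uniform(0,1), then the mixture
`Q(A) = ∫₀¹ K^β(A) M(dβ)` satisfies `Q(C_α) ≥ 1 − α` for all `α ∈ [0,1]`. -/
theorem stmt19 {T : Type*} [MeasurableSpace T] (π : T → ℝ) (hπ : Measurable π)
    (K : ℝ → Measure T)
    (hKprob : ∀ β ∈ Set.Icc (0 : ℝ) 1, IsProbabilityMeasure (K β))
    (hKsupp : ∀ β ∈ Set.Icc (0 : ℝ) 1, K β {θ | β < π θ} = 1)
    (M : Measure ℝ) [IsProbabilityMeasure M] (hM01 : M (Set.Icc (0 : ℝ) 1) = 1)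
    (hMdom : ∀ β : ℝ, β ∈ Set.Icc (0 : ℝ) 1 → M (Set.Iic β) ≤ ENNReal.ofReal β)
    (Q : Set T → ℝ≥0∞) (hQ : ∀ A, Q A = ∫⁻ β, K β A ∂M) :
    ∀ α : ℝ, α ∈ Set.Icc (0 : ℝ) 1 →
      ENNReal.ofReal (1 - α) ≤ Q {θ | α < π θ} := by
  intro α hα
  rw [hQ]
  have key : (Set.Icc α 1).indicator (fun _ => (1 : ℝ≥0∞)) ≤
      fun β => K β {θ | α < π θ} := by
    intro β
    by_cases hβ : β ∈ Set.Icc α 1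
    · rw [Set.indicator_of_mem hβ]
      have hβ01 : β ∈ Set.Icc (0 : ℝ) 1 := ⟨le_trans hα.1 hβ.1, hβ.2⟩
      have hsub : {θ | β < π θ} ⊆ {θ | α < π θ} := fun θ hθ =>
        lt_of_le_of_lt hβ.1 hθ
      calc (1 : ℝ≥0∞) = K β {θ | β < π θ} := (hKsupp β hβ01).symm
        _ ≤ K β {θ | α < π θ} := measure_mono hsub
    · rw [Set.indicator_of_notMem hβ]; exact zero_le
  refine le_trans ?_ (lintegral_mono key)
  rw [show (fun _ : ℝ => (1:ℝ≥0∞)) = 1 from rfl, lintegral_indicator_one measurableSet_Icc]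
  -- show ofReal (1 - α) ≤ M (Icc α 1)
  have h1 : M (Set.Icc (0 : ℝ) 1) ≤ M (Set.Icc α 1) + M (Set.Iic α) := by
    refine le_trans (measure_mono ?_) (measure_union_le _ _)
    intro x hx
    rcases le_or_gt α x with h | h
    · exact Or.inl ⟨h, hx.2⟩
    · exact Or.inr h.le
  rw [hM01] at h1
  have h2 : (1 : ℝ≥0∞) - M (Set.Iic α) ≤ M (Set.Icc α 1) := tsub_le_iff_right.mpr h1
  refine le_trans ?_ h2
  have h3 : M (Set.Iic α) ≤ ENNReal.ofReal α := hMdom α hα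
  calc ENNReal.ofReal (1 - α) = ENNReal.ofReal 1 - ENNReal.ofReal α :=
        ENNReal.ofReal_sub 1 hα.1
    _ = 1 - ENNReal.ofReal α := by rw [ENNReal.ofReal_one]
    _ ≤ 1 - M (Set.Iic α) := tsub_le_tsub_left h3 1
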